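/- For every real $x \geq 1$, $\sum_{k=1}^{\infty} k e^{-\pi x k^2 / 2} \leq e^{-\pi x/2} \sum_{k=1}^{\infty} k e^{-\pi (k^2-1)/2}$, and consequently $\sum_{k=1}^{\infty} k e^{-\pi x k^2/2} < 1.018\, e^{-\pi x / 2}$. -/

import Mathlib

open Real

theorem psi_half_bound (x : ℝ) (hx : 1 ≤ x) :
    (∑' k : ℕ, ((k : ℝ) + 1) * Real.exp (-Real.pi * x * ((k : ℝ) + 1)^2 / 2))
        ≤ Real.exp (-Real.pi * x / 2)
          * ∑' k : ℕ, ((k : ℝ) + 1) * Real.exp (-Real.pi * (((k : ℝ) + 1)^2 - 1) / 2)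
    ∧ (∑' k : ℕ, ((k : ℝ) + 1) * Real.exp (-Real.pi * x * ((k : ℝ) + 1)^2 / 2))
        < 1.018 * Real.exp (-Real.pi * x / 2) := by
  have hπ : (0:ℝ) < Real.pi := Real.pi_pos
  set f : ℕ → ℝ := fun k => ((k : ℝ) + 1) * Real.exp (-Real.pi * (((k : ℝ) + 1)^2 - 1) / 2) with hf_def
  set g : ℕ → ℝ := fun k => ((k : ℝ) + 1) * Real.exp (-Real.pi * x * ((k : ℝ) + 1)^2 / 2) with hg_def
  have hgeo : Summable (fun k : ℕ => ((k:ℝ) + 1) * Real.exp (-Real.pi) ^ k) := by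
    have h1 : ‖Real.exp (-Real.pi)‖ < 1 := by
      rw [Real.norm_eq_abs, abs_of_pos (Real.exp_pos _)]
      exact Real.exp_lt_one_iff.mpr (by linarith)
    have h2 := summable_pow_mul_geometric_of_norm_lt_one 1 h1 (R := ℝ)
    have h3 : Summable (fun k : ℕ => Real.exp (-Real.pi) ^ k) := summable_geometric_of_norm_lt_one h1
    refine (h2.add h3).congr fun k => by push_cast; ring
  have hfnn : ∀ k, 0 ≤ f k := fun k => by positivity
  have hgnn : ∀ k, 0 ≤ g k := fun k => by positivity
  have hexpk : ∀ k : ℕ, Real.exp (-Real.pi) ^ k = Real.exp (-Real.pi * k) := by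
    intro k
    rw [← Real.exp_nat_mul]; ring_nf
  have hf : Summable f := by
    apply Summable.of_nonneg_of_le hfnn _ hgeo
    intro k
    apply mul_le_mul_of_nonneg_left _ (by positivity)
    rw [hexpk]
    apply Real.exp_le_exp.mpr
    have hAB : (k:ℝ) ≤ (((k:ℝ)+1)^2 - 1)/2 := by nlinarith [sq_nonneg (k:ℝ), Nat.cast_nonneg (α := ℝ) k]
    nlinarith [mul_le_mul_of_nonneg_left hAB hπ.le]
  have hg : Summable g := by
    apply Summable.of_nonneg_of_le hgnn _ hgeo
    intro k
    apply mul_le_mul_of_nonneg_left _ (by positivity)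
    rw [hexpk]
    apply Real.exp_le_exp.mpr
    have hk : (0:ℝ) ≤ (k:ℝ) := Nat.cast_nonneg k
    have hAB : (k:ℝ) ≤ x * ((k:ℝ)+1)^2 / 2 := by nlinarith [sq_nonneg (k:ℝ), mul_le_mul_of_nonneg_right hx (sq_nonneg ((k:ℝ)+1))]
    nlinarith [mul_le_mul_of_nonneg_left hAB hπ.le]
  have hterm : ∀ k : ℕ, g k ≤ Real.exp (-Real.pi * x / 2) * f k := by
    intro k
    have he : Real.exp (-Real.pi * x / 2) * f k
        = ((k:ℝ)+1) * Real.exp (-Real.pi * x / 2 + -Real.pi * (((k : ℝ) + 1)^2 - 1) / 2) := by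
      rw [Real.exp_add]; ring
    rw [he]
    apply mul_le_mul_of_nonneg_left _ (by positivity)
    apply Real.exp_le_exp.mpr
    have hk : (0:ℝ) ≤ (k:ℝ) := Nat.cast_nonneg k
    have hAB : x / 2 + (((k:ℝ)+1)^2 - 1)/2 ≤ x * ((k:ℝ)+1)^2 / 2 := by
      nlinarith [mul_nonneg (sub_nonneg.mpr hx) (by nlinarith : (0:ℝ) ≤ ((k:ℝ)+1)^2 - 1)]
    nlinarith [mul_le_mul_of_nonneg_left hAB hπ.le]
  have h1 : (∑' k, g k) ≤ Real.exp (-Real.pi * x / 2) * ∑' k, f k := by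
    rw [← tsum_mul_left]
    exact Summable.tsum_le_tsum hterm hg (hf.mul_left _)
  refine ⟨h1, ?_⟩
  set b : ℝ := Real.exp (-(Real.pi / 2)) with hb_def
  have hb0 : 0 < b := Real.exp_pos _
  have hb : b ≤ 0.20794 := by
    have hE : (4.8091 : ℝ) ≤ Real.exp (Real.pi / 2) := by
      have e1 : (4.8091 : ℝ) ≤ ∑ i ∈ Finset.range 9, (1.570796 : ℝ) ^ i / i.factorial := by
        norm_num [Finset.sum_range_succ, Nat.factorial]
      have e2 := Real.sum_le_exp_of_nonneg (by norm_num : (0:ℝ) ≤ 1.570796) 9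
      have e3 : Real.exp (1.570796) ≤ Real.exp (Real.pi / 2) := by
        apply Real.exp_le_exp.mpr
        nlinarith [Real.pi_gt_d6]
      linarith
    rw [hb_def, Real.exp_neg]
    rw [inv_le_comm₀ (Real.exp_pos _) (by norm_num)]
    calc (0.20794:ℝ)⁻¹ ≤ 4.8091 := by norm_num
      _ ≤ Real.exp (Real.pi / 2) := hE
  have hb3 : Real.exp (-Real.pi * 3 / 2) = b ^ 3 := by
    rw [hb_def, ← Real.exp_nat_mul]
    congr 1
    push_cast
    ring
  have hb4k : ∀ k : ℕ, Real.exp (-Real.pi * (2 * ((k:ℝ) + 2))) = (b ^ 4) ^ (k + 2) := by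
    intro k
    rw [hb_def, ← Real.exp_nat_mul, ← Real.exp_nat_mul]
    congr 1
    push_cast
    ring
  have hb3u : b ^ 3 ≤ 0.20794 ^ 3 := pow_le_pow_left₀ hb0.le hb 3
  have hb4 : b ^ 4 ≤ 0.20794 ^ 4 := pow_le_pow_left₀ hb0.le hb 4
  set r : ℝ := 2 * b ^ 4 with hr_def
  have hr0 : 0 ≤ r := by positivity
  have hrsmall : r ≤ 0.004 := by
    rw [hr_def]; nlinarith
  have hr1 : r < 1 := by linarith
  have htail_term : ∀ k : ℕ, f (k + 2) ≤ r ^ (k + 2) := by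
    intro k
    have hd : f (k + 2) = ((k:ℝ) + 3) * Real.exp (-Real.pi * (((k:ℝ) + 3)^2 - 1) / 2) := by
      simp only [hf_def]
      push_cast
      ring_nf
    rw [hd, hr_def, mul_pow, ← hb4k k]
    have hpow : ((k:ℝ) + 3) ≤ 2 ^ (k + 2) := by
      have h2 : k + 1 ≤ 2 ^ k := Nat.lt_two_pow_self (n := k)
      have h2' : (k:ℝ) + 1 ≤ 2 ^ k := by exact_mod_cast h2
      have h4 : (2:ℝ) ^ (k + 2) = 4 * 2 ^ k := by ring
      nlinarith [Nat.cast_nonneg (α := ℝ) k]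
    have hexp : Real.exp (-Real.pi * (((k:ℝ) + 3)^2 - 1) / 2) ≤ Real.exp (-Real.pi * (2 * ((k:ℝ) + 2))) := by
      apply Real.exp_le_exp.mpr
      nlinarith [mul_nonneg hπ.le (by positivity : (0:ℝ) ≤ (k:ℝ)^2 + 2*(k:ℝ))]
    exact mul_le_mul hpow hexp (Real.exp_pos _).le (by positivity)
  have hgeo2 : Summable (fun k : ℕ => r ^ (k + 2)) := by
    have := (summable_geometric_of_lt_one hr0 hr1).mul_left (r ^ 2)
    refine this.congr fun k => by rw [← pow_add]; ring_nf
  have htail : (∑' k : ℕ, f (k + 2)) ≤ r ^ 2 * (1 - r)⁻¹ := by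
    have h := Summable.tsum_le_tsum htail_term ((summable_nat_add_iff 2).mpr hf) hgeo2
    calc (∑' k : ℕ, f (k + 2)) ≤ ∑' k : ℕ, r ^ (k + 2) := h
      _ = r ^ 2 * (1 - r)⁻¹ := by
          rw [show (fun k : ℕ => r ^ (k + 2)) = fun k : ℕ => r ^ 2 * r ^ k from
              funext fun k => by rw [← pow_add]; ring_nf,
            tsum_mul_left, tsum_geometric_of_lt_one hr0 hr1]
  have hsplit : (∑' k, f k) = f 0 + f 1 + ∑' k : ℕ, f (k + 2) := by
    rw [← Summable.sum_add_tsum_nat_add 2 hf, Finset.sum_range_succ, Finset.sum_range_one]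
  have hf0 : f 0 = 1 := by simp [hf_def]
  have hf1 : f 1 = 2 * b ^ 3 := by
    have : f 1 = 2 * Real.exp (-Real.pi * 3 / 2) := by
      simp only [hf_def]
      norm_num
    rw [this, hb3]
  have hdiv : r ^ 2 * (1 - r)⁻¹ ≤ r ^ 2 * (0.99 : ℝ)⁻¹ := by
    apply mul_le_mul_of_nonneg_left _ (by positivity)
    apply inv_anti₀ (by norm_num)
    linarith
  have hr2 : r ^ 2 ≤ 0.000016 := by nlinarith [hr0, hrsmall]
  have hT : r ^ 2 * (0.99 : ℝ)⁻¹ ≤ 0.0000164 := by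
    have h99 : (0.99 : ℝ)⁻¹ ≤ 1.02 := by norm_num
    calc r ^ 2 * (0.99 : ℝ)⁻¹ ≤ 0.000016 * 1.02 :=
          mul_le_mul hr2 h99 (by positivity) (by norm_num)
      _ ≤ 0.0000164 := by norm_num
  have hc : (0.20794 : ℝ) ^ 3 ≤ 0.0089912 := by norm_num
  have hfsum : (∑' k, f k) < 1.018 := by
    rw [hsplit, hf0, hf1]
    linarith [htail, hdiv, hT, hb3u, hc]
  have hE2 : 0 < Real.exp (-Real.pi * x / 2) := Real.exp_pos _
  calc (∑' k, g k) ≤ Real.exp (-Real.pi * x / 2) * ∑' k, f k := h1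
    _ < Real.exp (-Real.pi * x / 2) * 1.018 := mul_lt_mul_of_pos_left hfsum hE2
    _ = 1.018 * Real.exp (-Real.pi * x / 2) := by ring
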